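/- Let (X, 𝒳, λ, T) be an ergodic measure-preserving system and F ∈ L¹(λ) with F ≥ 0. Suppose (a_t)_{t≥1} is a sequence of measurable functions with 0 ≤ a_t ≤ (1/t)∑_{i=1}^{t} F∘T^i pointwise, such that for each fixed q, a_{bq+r} ≤ r/(bq+r) + (q/(bq+r)) ∑_{i=0}^{b-1} (1/q)(∑_{j=1}^{q} F∘T^{qi+j}) for all b ≥ 1 and 0 ≤ r < q. If additionally T^q is ergodic for every q ≥ 1 and (1/q)E_λ[∑_{j=1}^q F∘T^j] → L as q → ∞ and liminf_t a_t ≥ L a.s., then a_t → L λ-a.s. -/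

import Mathlib

open MeasureTheory Filter
open scoped ENNReal NNReal

namespace Stmt11Aux

variable {X : Type*} [MeasurableSpace X]

/-- Running maximum of Birkhoff sums (with `maxS 0 = 0`). -/
noncomputable def maxS (T' : X → X) (φ : X → ℝ) : ℕ → X → ℝ
  | 0 => fun _ => 0
  | n + 1 => fun x => max (maxS T' φ n x) (birkhoffSum T' φ (n + 1) x)

lemma maxS_succ (T' : X → X) (φ : X → ℝ) (n : ℕ) (x : X) :
    maxS T' φ (n + 1) x = max (maxS T' φ n x) (birkhoffSum T' φ (n + 1) x) := rfl

lemma maxS_nonneg (T' : X → X) (φ : X → ℝ) (n : ℕ) (x : X) : 0 ≤ maxS T' φ n x := by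
  induction n with
  | zero => exact le_rfl
  | succ n ih => exact ih.trans (le_max_left _ _)

lemma maxS_mono (T' : X → X) (φ : X → ℝ) (x : X) : Monotone fun n => maxS T' φ n x :=
  monotone_nat_of_le_succ fun n => le_max_left _ _

lemma birkhoffSum_le_maxS (T' : X → X) (φ : X → ℝ) {k n : ℕ} (h : k ≤ n) (x : X) :
    birkhoffSum T' φ k x ≤ maxS T' φ n x := by
  induction n with
  | zero =>
    obtain rfl := Nat.le_zero.mp h
    simp [maxS, birkhoffSum_zero]
  | succ n ih =>
    rcases Nat.eq_or_lt_of_le h with rfl | hk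
    · rw [maxS_succ]; exact le_max_right _ _
    · exact (ih (Nat.lt_succ_iff.mp hk)).trans (maxS_mono T' φ x (Nat.le_succ n))

lemma exists_maxS_pos {T' : X → X} {φ : X → ℝ} {n : ℕ} {x : X} (h : 0 < maxS T' φ n x) :
    ∃ m, m < n ∧ maxS T' φ n x ≤ birkhoffSum T' φ (m + 1) x := by
  induction n with
  | zero => exact absurd h (lt_irrefl _)
  | succ n ih =>
    rcases le_or_gt (birkhoffSum T' φ (n + 1) x) (maxS T' φ n x) with hle | hlt
    · rw [maxS_succ, max_eq_left hle] at h ⊢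
      obtain ⟨m, hm, hle'⟩ := ih h
      exact ⟨m, hm.trans (Nat.lt_succ_self n), hle'⟩
    · rw [maxS_succ, max_eq_right hlt.le]
      exact ⟨n, Nat.lt_succ_self n, le_rfl⟩

lemma maxS_le {T' : X → X} {φ : X → ℝ} {n : ℕ} {x : X} (h : 0 < maxS T' φ n x) :
    maxS T' φ n x ≤ φ x + maxS T' φ n (T' x) := by
  obtain ⟨m, hm, hle⟩ := exists_maxS_pos h
  calc maxS T' φ n x ≤ birkhoffSum T' φ (m + 1) x := hle
  _ = φ x + birkhoffSum T' φ m (T' x) := birkhoffSum_succ' T' φ m x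
  _ ≤ φ x + maxS T' φ n (T' x) := by
      exact add_le_add_right (birkhoffSum_le_maxS T' φ hm.le (T' x)) _

lemma measurable_birkhoffSum {T' : X → X} {φ : X → ℝ} (hT' : Measurable T') (hφ : Measurable φ)
    (n : ℕ) : Measurable (birkhoffSum T' φ n) := by
  unfold birkhoffSum
  exact Finset.measurable_sum _ fun k _ => hφ.comp (hT'.iterate k)

lemma measurable_maxS {T' : X → X} {φ : X → ℝ} (hT' : Measurable T') (hφ : Measurable φ)
    (n : ℕ) : Measurable (maxS T' φ n) := by
  induction n with
  | zero => exact measurable_const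
  | succ n ih => exact ih.max (measurable_birkhoffSum hT' hφ (n + 1))

lemma integrable_birkhoffSum {μ : Measure X} {T' : X → X} {φ : X → ℝ}
    (hT' : MeasurePreserving T' μ μ) (hφi : Integrable φ μ) (n : ℕ) :
    Integrable (birkhoffSum T' φ n) μ := by
  unfold birkhoffSum
  refine integrable_finset_sum _ fun k _ => ?_
  exact ((hT'.iterate k).integrable_comp hφi.aestronglyMeasurable).mpr hφi

lemma integrable_maxS {μ : Measure X} {T' : X → X} {φ : X → ℝ}
    (hT' : MeasurePreserving T' μ μ) (hφi : Integrable φ μ) (n : ℕ) :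
    Integrable (maxS T' φ n) μ := by
  induction n with
  | zero => exact integrable_zero _ _ _
  | succ n ih =>
    have h := ih.sup (integrable_birkhoffSum hT' hφi (n + 1))
    exact h.congr (Eventually.of_forall fun x => rfl)

/-- Hopf's maximal ergodic theorem (Garsia's proof). -/
lemma hopf {μ : Measure X} [IsProbabilityMeasure μ] {T' : X → X} {φ : X → ℝ}
    (hT' : MeasurePreserving T' μ μ) (hφm : Measurable φ) (hφi : Integrable φ μ) (n : ℕ) :
    0 ≤ ∫ x in {y | 0 < maxS T' φ n y}, φ x ∂μ := by
  have hTm : Measurable T' := hT'.measurable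
  set M := maxS T' φ n with hM
  have hMm : Measurable M := measurable_maxS hTm hφm n
  have hMi : Integrable M μ := integrable_maxS hT' hφi n
  have hMTi : Integrable (fun x => M (T' x)) μ :=
    (hT'.integrable_comp hMm.aestronglyMeasurable).mpr hMi
  set E := {y | 0 < M y} with hEdef
  have hEm : MeasurableSet E := measurableSet_lt measurable_const hMm
  have key : ∀ x ∈ E, M x - M (T' x) ≤ φ x := by
    intro x hx
    have h := maxS_le (T' := T') (φ := φ) (n := n) (x := x) hx
    linarith
  have h1 : ∫ x in E, (M x - M (T' x)) ∂μ ≤ ∫ x in E, φ x ∂μ :=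
    setIntegral_mono_on (hMi.sub hMTi).integrableOn hφi.integrableOn hEm key
  have h2 : ∫ x in E, (M x - M (T' x)) ∂μ = ∫ x in E, M x ∂μ - ∫ x in E, M (T' x) ∂μ :=
    integral_sub hMi.integrableOn hMTi.integrableOn
  have h3 : ∫ x in E, M x ∂μ = ∫ x, M x ∂μ := by
    have hc : ∫ x in Eᶜ, M x ∂μ = 0 := by
      rw [setIntegral_congr_fun hEm.compl (g := fun _ => (0 : ℝ))
        (fun x hx => le_antisymm (not_lt.mp hx) (maxS_nonneg T' φ n x))]
      simp
    have h := integral_add_compl hEm hMi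
    linarith
  have h4 : ∫ x in E, M (T' x) ∂μ ≤ ∫ x, M (T' x) ∂μ :=
    setIntegral_le_integral hMTi (Eventually.of_forall fun x => maxS_nonneg T' φ n (T' x))
  have h5 : ∫ x, M (T' x) ∂μ = ∫ x, M x ∂μ := by
    rw [← integral_map hTm.aemeasurable hMm.aestronglyMeasurable, hT'.map_eq]
  linarith

lemma hopf_int {μ : Measure X} [IsProbabilityMeasure μ] {T' : X → X} {φ : X → ℝ}
    (hT' : MeasurePreserving T' μ μ) (hφm : Measurable φ) (hφi : Integrable φ μ)
    (h : ∀ᵐ x ∂μ, ∃ n, 0 < maxS T' φ n x) : 0 ≤ ∫ x, φ x ∂μ := by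
  have hTm := hT'.measurable
  set E : ℕ → Set X := fun n => {y | 0 < maxS T' φ n y} with hE
  have hEm : ∀ n, MeasurableSet (E n) := fun n =>
    measurableSet_lt measurable_const (measurable_maxS hTm hφm n)
  have hmono : Monotone E := fun m n hmn x hx => lt_of_lt_of_le hx (maxS_mono T' φ x hmn)
  have htend := tendsto_setIntegral_of_monotone hEm hmono hφi.integrableOn
  have hU : μ ((⋃ n, E n)ᶜ) = 0 := by
    have h' : ∀ᵐ x ∂μ, x ∈ ⋃ n, E n :=
      h.mono fun x hx => Set.mem_iUnion.mpr hx
    exact ae_iff.mp h'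
  have hInt : ∫ x in ⋃ n, E n, φ x ∂μ = ∫ x, φ x ∂μ := by
    have hcompl := integral_add_compl (MeasurableSet.iUnion hEm) hφi
    have h0 : ∫ x in (⋃ n, E n)ᶜ, φ x ∂μ = 0 := by
      rw [Measure.restrict_eq_zero.mpr hU]
      simp
    linarith
  rw [← hInt]
  exact ge_of_tendsto' htend fun n => hopf hT' hφm hφi n

/-- Exact invariance of the (extended-valued) limsup of Birkhoff averages. -/
lemma limsup_invariant {T' : X → X} {g : X → ℝ} (hg0 : ∀ x, 0 ≤ g x) (x : X) :
    limsup (fun b : ℕ => ENNReal.ofReal (birkhoffSum T' g b (T' x) / b)) atTop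
      = limsup (fun b : ℕ => ENNReal.ofReal (birkhoffSum T' g b x / b)) atTop := by
  have hS0 : ∀ (b : ℕ) (y : X), 0 ≤ birkhoffSum T' g b y := fun b y =>
    Finset.sum_nonneg fun i _ => hg0 _
  have hrec : ∀ b : ℕ, birkhoffSum T' g b (T' x) = birkhoffSum T' g (b + 1) x - g x := by
    intro b
    rw [birkhoffSum_succ' T' g b x]
    ring
  set u : ℕ → ENNReal := fun b => ENNReal.ofReal (birkhoffSum T' g b x / b) with hu
  set v : ℕ → ENNReal := fun b => ENNReal.ofReal (birkhoffSum T' g b (T' x) / b) with hv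
  apply le_antisymm
  · refine ENNReal.le_of_forall_pos_le_add fun ε hε htop => ?_
    set K := limsup u atTop with hK
    have hKt : K ≠ ⊤ := htop.ne
    have hKtR : 0 ≤ K.toReal := ENNReal.toReal_nonneg
    have hεR : (0 : ℝ) < ε := hε
    set δ : ℝ := (ε : ℝ) / (K.toReal + 1) with hδ
    have hδpos : 0 < δ := div_pos hεR (by linarith)
    have hev : ∀ᶠ b : ℕ in atTop, v b ≤ ENNReal.ofReal (1 + δ) * u (b + 1) := by
      filter_upwards [eventually_ge_atTop (max 1 ⌈1 / δ⌉₊)] with b hb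
      have hb1 : 1 ≤ b := le_trans (le_max_left _ _) hb
      have hbpos : (0 : ℝ) < b := by exact_mod_cast hb1
      have hbd : 1 / δ ≤ (b : ℝ) := by
        have h1 : (⌈1 / δ⌉₊ : ℝ) ≤ b := by
          exact_mod_cast le_trans (le_max_right _ _) hb
        exact le_trans (Nat.le_ceil _) h1
      have h1 : 1 ≤ δ * b := by
        rw [div_le_iff₀ hδpos] at hbd
        linarith [hbd]
      have hcast : ((b + 1 : ℕ) : ℝ) = (b : ℝ) + 1 := by push_cast; ring
      show ENNReal.ofReal (birkhoffSum T' g b (T' x) / b) ≤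
        ENNReal.ofReal (1 + δ) * ENNReal.ofReal (birkhoffSum T' g (b + 1) x / ((b + 1 : ℕ) : ℝ))
      rw [hcast, ← ENNReal.ofReal_mul (by linarith : (0 : ℝ) ≤ 1 + δ)]
      apply ENNReal.ofReal_le_ofReal
      have e1 : birkhoffSum T' g b (T' x) / b ≤ birkhoffSum T' g (b + 1) x / b := by
        rw [hrec b]
        have := hg0 x
        gcongr
        linarith
      have hfrac : ((b : ℝ) + 1) / b ≤ 1 + δ := by
        rw [div_le_iff₀ hbpos]
        nlinarith
      have e2 : birkhoffSum T' g (b + 1) x / b ≤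
          (1 + δ) * (birkhoffSum T' g (b + 1) x / ((b : ℝ) + 1)) := by
        have hid : birkhoffSum T' g (b + 1) x / b =
            (birkhoffSum T' g (b + 1) x / ((b : ℝ) + 1)) * (((b : ℝ) + 1) / b) := by
          field_simp
        rw [hid, mul_comm (1 + δ) _]
        exact mul_le_mul_of_nonneg_left hfrac (div_nonneg (hS0 _ _) (by linarith))
      exact e1.trans e2
    calc limsup v atTop ≤ limsup (fun b : ℕ => ENNReal.ofReal (1 + δ) * u (b + 1)) atTop :=
          limsup_le_limsup hev
      _ = ENNReal.ofReal (1 + δ) * limsup (fun b : ℕ => u (b + 1)) atTop :=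
          ENNReal.limsup_const_mul_of_ne_top ENNReal.ofReal_ne_top
      _ = ENNReal.ofReal (1 + δ) * K := by rw [limsup_nat_add u 1]
      _ ≤ K + ε := by
          rw [ENNReal.ofReal_add zero_le_one hδpos.le, ENNReal.ofReal_one, add_mul, one_mul]
          refine add_le_add_right ?_ K
          conv_lhs => rw [← ENNReal.ofReal_toReal hKt]
          rw [← ENNReal.ofReal_mul hδpos.le, ← ENNReal.ofReal_coe_nnreal]
          apply ENNReal.ofReal_le_ofReal
          rw [hδ, div_mul_eq_mul_div, div_le_iff₀ (by linarith : (0 : ℝ) < K.toReal + 1)]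
          nlinarith
  · refine ENNReal.le_of_forall_pos_le_add fun ε hε _ => ?_
    have hεR : (0 : ℝ) < ε := hε
    have hev : ∀ᶠ b : ℕ in atTop, u (b + 1) ≤ v b + (ε : ENNReal) := by
      filter_upwards [eventually_ge_atTop (max 1 ⌈g x / (ε : ℝ)⌉₊)] with b hb
      have hb1 : 1 ≤ b := le_trans (le_max_left _ _) hb
      have hbpos : (0 : ℝ) < b := by exact_mod_cast hb1
      have hgb : g x / ((b : ℝ) + 1) ≤ ε := by
        have h1 : g x / (ε : ℝ) ≤ b := by
          have h2 : (⌈g x / (ε : ℝ)⌉₊ : ℝ) ≤ b := by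
            exact_mod_cast le_trans (le_max_right _ _) hb
          exact le_trans (Nat.le_ceil _) h2
        rw [div_le_iff₀ (by positivity : (0 : ℝ) < (b : ℝ) + 1)]
        rw [div_le_iff₀ hεR] at h1
        nlinarith
      have e : birkhoffSum T' g (b + 1) x / ((b : ℝ) + 1) ≤
          birkhoffSum T' g b (T' x) / b + ε := by
        have h1 : birkhoffSum T' g (b + 1) x = g x + birkhoffSum T' g b (T' x) :=
          birkhoffSum_succ' T' g b x
        have h2 : birkhoffSum T' g (b + 1) x / ((b : ℝ) + 1) =
            g x / ((b : ℝ) + 1) + birkhoffSum T' g b (T' x) / ((b : ℝ) + 1) := by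
          rw [h1, add_div]
        have h3 : birkhoffSum T' g b (T' x) / ((b : ℝ) + 1) ≤
            birkhoffSum T' g b (T' x) / b := by
          gcongr
          · exact hS0 b (T' x)
          · linarith
        linarith
      have hcast : ((b + 1 : ℕ) : ℝ) = (b : ℝ) + 1 := by push_cast; ring
      show ENNReal.ofReal (birkhoffSum T' g (b + 1) x / ((b + 1 : ℕ) : ℝ)) ≤
        ENNReal.ofReal (birkhoffSum T' g b (T' x) / b) + (ε : ENNReal)
      rw [hcast]
      calc ENNReal.ofReal (birkhoffSum T' g (b + 1) x / ((b : ℝ) + 1))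
          ≤ ENNReal.ofReal (birkhoffSum T' g b (T' x) / b + (ε : ℝ)) :=
            ENNReal.ofReal_le_ofReal e
        _ ≤ ENNReal.ofReal (birkhoffSum T' g b (T' x) / b) + ENNReal.ofReal (ε : ℝ) :=
            ENNReal.ofReal_add_le
        _ = ENNReal.ofReal (birkhoffSum T' g b (T' x) / b) + (ε : ENNReal) := by
            rw [ENNReal.ofReal_coe_nnreal]
    calc limsup u atTop = limsup (fun b : ℕ => u (b + 1)) atTop := (limsup_nat_add u 1).symm
      _ ≤ limsup (fun b : ℕ => v b + (ε : ENNReal)) atTop := limsup_le_limsup hev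
      _ = limsup v atTop + (ε : ENNReal) :=
          limsup_add_const atTop v (ε : ENNReal) ⟨⊤, Eventually.of_forall fun _ => le_top⟩
            isCobounded_le_of_bot

/-- For an ergodic map, eventually the Birkhoff sums are below `c * b` for any
`c` above the mean. -/
lemma key {μ : Measure X} [IsProbabilityMeasure μ] {T' : X → X}
    (hT' : Ergodic T' μ) {g : X → ℝ} (hgm : Measurable g) (hgi : Integrable g μ)
    (hg0 : ∀ x, 0 ≤ g x) {c : ℝ} (hc : ∫ x, g x ∂μ < c) :
    ∀ᵐ x ∂μ, ∀ᶠ b : ℕ in atTop, birkhoffSum T' g b x < c * b := by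
  have hTm : Measurable T' := hT'.toMeasurePreserving.measurable
  set m := ∫ x, g x ∂μ with hm
  have hm0 : 0 ≤ m := integral_nonneg hg0
  set c'' : ℝ := (m + c) / 2 with hc''def
  have hmc'' : m < c'' := by rw [hc''def]; linarith
  have hc''c : c'' < c := by rw [hc''def]; linarith
  have hc''pos : 0 < c'' := by rw [hc''def]; linarith
  set Λ : X → ℝ≥0∞ :=
    fun x => limsup (fun b : ℕ => ENNReal.ofReal (birkhoffSum T' g b x / b)) atTop with hΛ
  have hinv : ∀ x, Λ (T' x) = Λ x := fun x => limsup_invariant hg0 x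
  have hΛm : Measurable Λ :=
    Measurable.limsup fun b => ((measurable_birkhoffSum hTm hgm b).div_const _).ennreal_ofReal
  set D : Set X := {x | ENNReal.ofReal c'' ≤ Λ x} with hD
  have hDm : MeasurableSet D := hΛm measurableSet_Ici
  have hDinv : T' ⁻¹' D = D := by
    ext x
    simp only [hD, Set.mem_preimage, Set.mem_setOf_eq, hinv x]
  rcases hT'.ae_empty_or_univ hDm hDinv with hD0 | hD1
  · have hnotD : ∀ᵐ x ∂μ, x ∉ D := by
      have : μ D = 0 := by
        have := hD0
        rwa [ae_eq_empty] at this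
      exact (ae_iff).mpr (by simpa using this)
    filter_upwards [hnotD] with x hx
    have hlt : Λ x < ENNReal.ofReal c'' := not_le.mp hx
    have hev := eventually_lt_of_limsup_lt hlt
    filter_upwards [hev, eventually_ge_atTop 1] with b hb hb1
    have hbpos : (0 : ℝ) < b := by exact_mod_cast hb1
    have hdiv : birkhoffSum T' g b x / b < c'' := by
      by_contra hcon
      exact absurd hb (not_lt.mpr (ENNReal.ofReal_le_ofReal (not_lt.mp hcon)))
    have h1 : birkhoffSum T' g b x < c'' * b := (div_lt_iff₀ hbpos).mp hdiv
    have h2 : c'' * b ≤ c * b := by nlinarith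
    linarith
  · exfalso
    set c3 : ℝ := (m + c'') / 2 with hc3def
    have hmc3 : m < c3 := by rw [hc3def]; linarith
    have hc3c'' : c3 < c'' := by rw [hc3def]; linarith
    set φ : X → ℝ := fun x => g x - c3 with hφdef
    have hφm : Measurable φ := hgm.sub measurable_const
    have hφi : Integrable φ μ := hgi.sub (integrable_const _)
    have hmemD : ∀ᵐ x ∂μ, x ∈ D := by
      have h' := hD1
      rw [ae_eq_univ] at h'
      exact (ae_iff).mpr h'
    have hae : ∀ᵐ x ∂μ, ∃ n, 0 < maxS T' φ n x := by
      filter_upwards [hmemD] with x hx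
      have hx' : ENNReal.ofReal c'' ≤ Λ x := hx
      have hlt : ENNReal.ofReal c3 < Λ x :=
        lt_of_lt_of_le ((ENNReal.ofReal_lt_ofReal_iff hc''pos).mpr hc3c'') hx'
      have hfreq : ∃ᶠ b : ℕ in atTop,
          ENNReal.ofReal c3 < ENNReal.ofReal (birkhoffSum T' g b x / b) :=
        frequently_lt_of_lt_limsup (by isBoundedDefault) hlt
      obtain ⟨b, hb, hb1⟩ := (hfreq.and_eventually (eventually_ge_atTop 1)).exists
      have hbpos : (0 : ℝ) < b := by exact_mod_cast hb1
      have hdiv : c3 < birkhoffSum T' g b x / b := by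
        by_contra hcon
        exact absurd hb (not_lt.mpr (ENNReal.ofReal_le_ofReal (not_lt.mp hcon)))
      have hSg : c3 * b < birkhoffSum T' g b x := (lt_div_iff₀ hbpos).mp hdiv
      have hSφ : birkhoffSum T' φ b x = birkhoffSum T' g b x - b * c3 := by
        simp only [hφdef, birkhoffSum, Finset.sum_sub_distrib, Finset.sum_const,
          Finset.card_range, nsmul_eq_mul]
      have hpos : 0 < birkhoffSum T' φ b x := by
        rw [hSφ]
        nlinarith
      exact ⟨b, lt_of_lt_of_le hpos (birkhoffSum_le_maxS T' φ le_rfl x)⟩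
    have hnn := hopf_int hT'.toMeasurePreserving hφm hφi hae
    have hint : ∫ x, φ x ∂μ = m - c3 := by
      simp only [hφdef]
      rw [integral_sub hgi (integrable_const _), integral_const]
      simp [hm]
    rw [hint] at hnn
    linarith

end Stmt11Aux

open Stmt11Aux

/-- The sandwiching/bracketing argument: if 0 ≤ a_t ≤ Birkhoff averages of
F, the block upper bound holds, T^q is ergodic for every q, the block means converge to
L, and liminf a_t ≥ L a.s., then a_t → L a.s. -/
theorem stmt_11 {X : Type*} [MeasurableSpace X] (μ : Measure X) [IsProbabilityMeasure μ]
    (T : X → X) (F : X → ℝ) (hF : Integrable F μ) (hFnn : ∀ x, 0 ≤ F x)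
    (a : ℕ → X → ℝ) (ha : ∀ t, Measurable (a t))
    (hup : ∀ t : ℕ, 1 ≤ t → ∀ x, 0 ≤ a t x ∧
      a t x ≤ (1 / (t : ℝ)) * ∑ i ∈ Finset.Icc 1 t, F (T^[i] x))
    (hblock : ∀ q : ℕ, 1 ≤ q → ∀ b : ℕ, 1 ≤ b → ∀ r : ℕ, r < q → ∀ x,
      a (b * q + r) x ≤ (r : ℝ) / (b * q + r) +
        ((q : ℝ) / (b * q + r)) *
          ∑ i ∈ Finset.range b, (1 / (q : ℝ)) * ∑ j ∈ Finset.Icc 1 q, F (T^[q * i + j] x))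
    (herg : ∀ q : ℕ, 1 ≤ q → Ergodic (T^[q]) μ)
    (L : ℝ)
    (hmean : Tendsto (fun q : ℕ =>
        (1 / (q : ℝ)) * ∫ x, (∑ j ∈ Finset.Icc 1 q, F (T^[j] x)) ∂μ) atTop (nhds L))
    (hliminf : ∀ᵐ x ∂μ, L ≤ liminf (fun t : ℕ => a t x) atTop) :
    ∀ᵐ x ∂μ, Tendsto (fun t : ℕ => a t x) atTop (nhds L) := by
  classical
  have hT1 : Ergodic T μ := by
    have := herg 1 le_rfl
    rwa [Function.iterate_one] at this
  have hTp : MeasurePreserving T μ μ := hT1.toMeasurePreserving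
  have hTm : Measurable T := hTp.measurable
  set F' : X → ℝ := fun x => max (hF.1.mk F x) 0 with hF'def
  have hF'm : Measurable F' := hF.1.stronglyMeasurable_mk.measurable.max measurable_const
  have hFF' : F =ᵐ[μ] F' := by
    filter_upwards [hF.1.ae_eq_mk] with x hx
    simp only [hF'def, ← hx, max_eq_left (hFnn x)]
  have hF'i : Integrable F' μ := hF.congr hFF'
  have hF'0 : ∀ x, 0 ≤ F' x := fun x => le_max_right _ _
  have horb : ∀ᵐ x ∂μ, ∀ k : ℕ, F (T^[k] x) = F' (T^[k] x) := by
    rw [ae_all_iff]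
    intro k
    exact (hTp.iterate k).quasiMeasurePreserving.ae_eq_comp hFF'
  have hL0 : 0 ≤ L :=
    ge_of_tendsto' hmean fun q => mul_nonneg (by positivity)
      (integral_nonneg fun x => Finset.sum_nonneg fun j _ => hFnn _)
  have main : ∀ n : ℕ, ∀ᵐ x ∂μ, ∀ᶠ t : ℕ in atTop, a t x < L + 1 / ((n : ℝ) + 1) := by
    intro n
    set ε : ℝ := 1 / ((n : ℝ) + 1) with hεdef
    have hεpos : 0 < ε := by rw [hεdef]; positivity
    obtain ⟨q, hql, hq1⟩ :=
      ((hmean.eventually_lt_const (by linarith : L < L + ε / 2)).and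
        (eventually_ge_atTop 1)).exists
    have hq0 : 0 < q := hq1
    set g : X → ℝ := fun x => (1 / (q : ℝ)) * ∑ j ∈ Finset.Icc 1 q, F' (T^[j] x) with hgdef
    have hgm : Measurable g :=
      measurable_const.mul (Finset.measurable_sum _ fun j _ => hF'm.comp (hTm.iterate j))
    have hgi : Integrable g μ :=
      (integrable_finset_sum _ fun j _ =>
        ((hTp.iterate j).integrable_comp hF'i.aestronglyMeasurable).mpr hF'i).const_mul _
    have hg0 : ∀ x, 0 ≤ g x := fun x =>
      mul_nonneg (by positivity) (Finset.sum_nonneg fun j _ => hF'0 _)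
    have hgint : ∫ x, g x ∂μ =
        (1 / (q : ℝ)) * ∫ x, (∑ j ∈ Finset.Icc 1 q, F (T^[j] x)) ∂μ := by
      simp only [hgdef]
      rw [integral_const_mul]
      congr 1
      apply integral_congr_ae
      filter_upwards [horb] with x hx
      exact Finset.sum_congr rfl fun j _ => (hx j).symm
    have hc : ∫ x, g x ∂μ < L + ε / 2 := by rw [hgint]; exact hql
    have hkey := key (herg q hq1) hgm hgi hg0 hc
    filter_upwards [hkey, horb] with x hx hxorb
    obtain ⟨B, hB⟩ := eventually_atTop.mp hx
    rw [eventually_atTop]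
    refine ⟨max (q * (B + 1)) (⌈2 * (q : ℝ) / ε⌉₊ + 1), fun t ht => ?_⟩
    have ht1 : q * (B + 1) ≤ t := le_trans (le_max_left _ _) ht
    have ht2 : ⌈2 * (q : ℝ) / ε⌉₊ + 1 ≤ t := le_trans (le_max_right _ _) ht
    have ht0 : 1 ≤ t := by omega
    set b := t / q with hbdef
    set r := t % q with hrdef
    have hbB : B + 1 ≤ b := by
      rw [hbdef, Nat.le_div_iff_mul_le hq0]
      rwa [Nat.mul_comm] at ht1
    have hb1 : 1 ≤ b := by omega
    have hrq : r < q := Nat.mod_lt t hq0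
    have htbq : b * q + r = t := by
      rw [hbdef, hrdef, Nat.mul_comm]
      exact Nat.div_add_mod t q
    have hblk := hblock q hq1 b hb1 r hrq x
    rw [htbq] at hblk
    have hcast : (b : ℝ) * q + r = (t : ℝ) := by
      have : ((b * q + r : ℕ) : ℝ) = (t : ℝ) := by rw [htbq]
      push_cast at this
      linarith
    rw [hcast] at hblk
    have hsum : ∑ i ∈ Finset.range b, (1 / (q : ℝ)) * ∑ j ∈ Finset.Icc 1 q, F (T^[q * i + j] x)
        = birkhoffSum (T^[q]) g b x := by
      apply Finset.sum_congr rfl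
      intro i _
      have hterm : g ((T^[q])^[i] x) =
          (1 / (q : ℝ)) * ∑ j ∈ Finset.Icc 1 q, F' (T^[j] ((T^[q])^[i] x)) := rfl
      rw [hterm]
      congr 1
      refine Finset.sum_congr rfl fun j _ => ?_
      rw [hxorb (q * i + j)]
      congr 1
      rw [Nat.add_comm, Function.iterate_add_apply, Function.iterate_mul]
    rw [hsum] at hblk
    have hSb : birkhoffSum (T^[q]) g b x < (L + ε / 2) * b := hB b (by omega)
    have htR : (0 : ℝ) < t := by exact_mod_cast ht0
    have hqb_le : (q : ℝ) * b ≤ t := by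
      have h5 : q * b ≤ t := by
        rw [← htbq, Nat.mul_comm]
        exact Nat.le_add_right _ _
      exact_mod_cast h5
    have hqt : (q : ℝ) / t < ε / 2 := by
      have h6 : 2 * (q : ℝ) / ε < t := by
        have h7 : (⌈2 * (q : ℝ) / ε⌉₊ : ℝ) + 1 ≤ t := by exact_mod_cast ht2
        have h8 : 2 * (q : ℝ) / ε ≤ (⌈2 * (q : ℝ) / ε⌉₊ : ℝ) := Nat.le_ceil _
        linarith
      rw [div_lt_iff₀ htR]
      rw [div_lt_iff₀ hεpos] at h6
      nlinarith
    have hc0 : 0 ≤ L + ε / 2 := by linarith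
    have e1 : (q : ℝ) / t * birkhoffSum (T^[q]) g b x ≤ (q : ℝ) / t * ((L + ε / 2) * b) :=
      mul_le_mul_of_nonneg_left hSb.le (by positivity)
    have e2 : (q : ℝ) / t * ((L + ε / 2) * b) ≤ L + ε / 2 := by
      have h9 : (q : ℝ) * b / t ≤ 1 := (div_le_one htR).mpr hqb_le
      calc (q : ℝ) / t * ((L + ε / 2) * b) = (L + ε / 2) * ((q : ℝ) * b / t) := by ring
        _ ≤ (L + ε / 2) * 1 := mul_le_mul_of_nonneg_left h9 hc0
        _ = L + ε / 2 := mul_one _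
    have e3 : (r : ℝ) / t ≤ (q : ℝ) / t := by
      have : (r : ℝ) ≤ (q : ℝ) := by exact_mod_cast hrq.le
      gcongr
    have : a t x < L + ε := by linarith
    rwa [hεdef] at this
  have hmain : ∀ᵐ x ∂μ, ∀ n : ℕ, ∀ᶠ t : ℕ in atTop, a t x < L + 1 / ((n : ℝ) + 1) :=
    ae_all_iff.mpr main
  filter_upwards [hmain, hliminf] with x hx hlx
  refine tendsto_order.2 ⟨?_, ?_⟩
  · intro l hl
    have hbdd : IsBoundedUnder (· ≥ ·) atTop (fun t : ℕ => a t x) :=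
      ⟨0, eventually_map.mpr (eventually_atTop.mpr ⟨1, fun t ht => (hup t ht x).1⟩)⟩
    exact eventually_lt_of_lt_liminf (lt_of_lt_of_le hl hlx) hbdd
  · intro u hu
    obtain ⟨n, hn⟩ := exists_nat_one_div_lt (by linarith : (0 : ℝ) < u - L)
    exact (hx n).mono fun t htt => htt.trans (by linarith)
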